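/- arXiv:1110.2635 — 5 statements merged into one kernel-verified Lean document; each statement's English description precedes it below -/
import Mathlib

section
/- Let T be a tree without vertices of degree 1 and d* : V(T) → ℕ a codistance function (i.e. if d*(v) = n and v' is adjacent to v then d*(v') ∈ {n-1, n+1}, and if n > 0 there is a unique neighbour v' of v with d*(v') = n+1). Then the set of vertices v with d*(v) = 0 is nonempty implies: for every vertex v and every k ≤ d*(v), there exists a vertex w at graph distance d*(v) - k from v with d*(w) = k. -/
open SimpleGraph

/-- A codistance on a graph: values of neighbours differ by exactly 1, and any vertex of
positive value has a unique neighbour of larger value. -/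
def IsCodistance {V : Type*} (G : SimpleGraph V) (d : V → ℕ) : Prop :=
  (∀ v v' : V, G.Adj v v' → d v' = d v + 1 ∨ d v' + 1 = d v) ∧
  (∀ v : V, 0 < d v → ∃! v' : V, G.Adj v v' ∧ d v' = d v + 1)

theorem stmt0 {V : Type*} (G : SimpleGraph V) (hT : G.IsTree)
    (hdeg : ∀ v : V, ∃ w w' : V, w ≠ w' ∧ G.Adj v w ∧ G.Adj v w')
    (d : V → ℕ) (hd : IsCodistance G d)
    (h0 : ∃ v : V, d v = 0) :
    ∀ v : V, ∀ k ≤ d v, ∃ w : V, G.dist v w = d v - k ∧ d w = k := by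
  have hconn : G.Connected := hT.isConnected
  -- values differ by at most the walk length
  have hwalk : ∀ {a b : V} (p : G.Walk a b), d a ≤ d b + p.length := by
    intro a b p
    induction p with
    | nil => simp
    | @cons a x b hadj q ih =>
      have h1 : d a ≤ d x + 1 := by
        rcases hd.1 a x hadj with h' | h' <;> omega
      simp only [SimpleGraph.Walk.length_cons]
      omega
  have hdist : ∀ a b : V, d a ≤ d b + G.dist a b := by
    intro a b
    obtain ⟨p, hp⟩ := (hconn a b).exists_walk_length_eq_dist
    simpa [hp] using hwalk p
  -- descent: every vertex of positive value has a neighbour of value one less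
  have hdown : ∀ v : V, 0 < d v → ∃ u : V, G.Adj v u ∧ d u + 1 = d v := by
    intro v hv
    obtain ⟨u, hu, huniq⟩ := hd.2 v hv
    obtain ⟨w, w', hne, hw, hw'⟩ := hdeg v
    by_cases hwu : w = u
    · refine ⟨w', hw', ?_⟩
      rcases hd.1 v w' hw' with h' | h'
      · exact absurd (huniq w' ⟨hw', h'⟩) (by rw [← hwu]; exact fun e => hne e.symm)
      · exact h'
    · refine ⟨w, hw, ?_⟩
      rcases hd.1 v w hw with h' | h'
      · exact absurd (huniq w ⟨hw, h'⟩) hwu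
      · exact h'
  -- main induction on n = d v
  have main : ∀ n : ℕ, ∀ v : V, d v = n → ∀ k ≤ n, ∃ w : V, G.dist v w = n - k ∧ d w = k := by
    intro n
    induction n with
    | zero =>
      intro v hv k hk
      exact ⟨v, by simp, by omega⟩
    | succ n ih =>
      intro v hv k hk
      rcases eq_or_lt_of_le hk with heq | hlt
      · exact ⟨v, by simp [heq], by omega⟩
      · have hk' : k ≤ n := by omega
        obtain ⟨u, hadj, hu⟩ := hdown v (by omega)
        obtain ⟨w, hw1, hw2⟩ := ih u (by omega) k hk'
        refine ⟨w, ?_, hw2⟩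
        have hle : G.dist v w ≤ n + 1 - k := by
          calc G.dist v w ≤ G.dist v u + G.dist u w := hconn.dist_triangle
            _ ≤ 1 + (n - k) := by
                have : G.dist v u ≤ 1 := by
                  simpa using G.dist_le (SimpleGraph.Walk.cons hadj SimpleGraph.Walk.nil)
                omega
            _ = n + 1 - k := by omega
        have hge := hdist v w
        omega
  intro v k hk
  exact main (d v) v rfl k hk
end

section
/- Suppose (A, d*) ∈ K_n and (A ∪ {y}, d*) ∈ K_n, where y is a single new vertex adjacent to a unique vertex x_k of A_k. Then A ∪ {y} is an elementary good extension of A: either (type 1) for every tuple x̄ ∈ ∏ A_i with k-th coordinate x_k, the value at the tuple with y substituted is |d*(x̄) − 1|; or (type 2) there is a tuple x̄ containing x_k at which d* is locally maximal, such that the value with y substituted for x_k is d*(z̄) + 1 exactly for the tuples z̄ (with k-th coordinate x_k) that are geodesic with x̄, and |d*(z̄) − 1| otherwise. -/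
open SimpleGraph

lemma stmt6_toward {W : Type} {G : SimpleGraph W} (hc : G.Connected) {a b : W}
    (h : 0 < G.dist a b) : ∃ w, G.Adj b w ∧ G.dist a w + 1 = G.dist a b := by
  obtain ⟨p, hp⟩ := hc.exists_walk_length_eq_dist b a
  cases p with
  | nil =>
    rw [SimpleGraph.dist_comm] at h
    simp only [SimpleGraph.Walk.length_nil] at hp
    omega
  | cons hadj q =>
    rename_i w
    refine ⟨w, hadj, ?_⟩
    have h1 : G.dist w a ≤ q.length := SimpleGraph.dist_le q
    have h2 : G.dist b a ≤ G.dist b w + G.dist w a := hc.dist_triangle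
    have h3 : G.dist b w ≤ 1 := by
      have := SimpleGraph.dist_le (SimpleGraph.Walk.cons hadj SimpleGraph.Walk.nil)
      simpa using this
    have h4 : q.length + 1 = G.dist b a := by
      simpa [SimpleGraph.Walk.length_cons] using hp
    rw [SimpleGraph.dist_comm (u := a) (v := w), SimpleGraph.dist_comm (u := a) (v := b)]
    omega

lemma stmt6_sum {n : ℕ} {V : Fin n → Type} (G : ∀ i, SimpleGraph (V i))
    (x z : ∀ i, V i) (i : Fin n) (w : V i) :
    (∑ j, (G j).dist (x j) (Function.update z i w j)) + (G i).dist (x i) (z i)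
      = (∑ j, (G j).dist (x j) (z j)) + (G i).dist (x i) w := by
  have key : ∀ v : V i, (∑ j, (G j).dist (x j) (Function.update z i v j))
      = (G i).dist (x i) v + ∑ j ∈ Finset.univ \ {i}, (G j).dist (x j) (z j) := by
    intro v
    have h : ∀ j, (G j).dist (x j) (Function.update z i v j)
        = Function.update (fun j => (G j).dist (x j) (z j)) i ((G i).dist (x i) v) j := by
      intro j
      by_cases hj : j = i
      · subst hj; simp
      · simp [Function.update_of_ne hj]
    rw [Finset.sum_congr rfl fun j _ => h j]
    exact Finset.sum_update_of_mem (Finset.mem_univ i) _ _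
  have h1 := key w
  have h2 := key (z i)
  rw [Function.update_eq_self] at h2
  omega


/-- The class `K_n`: `n`-tuples of nonempty finite trees with a codistance function
`d : ∏ A_i → ℕ` satisfying axioms (1)-(4) of the paper. -/
def InK (n : ℕ) (V : Fin n → Type) (G : ∀ i, SimpleGraph (V i))
    (d : (∀ i, V i) → ℕ) : Prop :=
  (∀ i, Finite (V i)) ∧ (∀ i, (G i).IsTree) ∧
  -- (1) some tuple has codistance 0
  (∃ x : ∀ i, V i, d x = 0) ∧
  -- (2) changing one coordinate to a neighbour changes d by exactly ±1
  (∀ (x : ∀ i, V i) (i : Fin n) (y : V i), (G i).Adj (x i) y →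
    d (Function.update x i y) = d x + 1 ∨ d (Function.update x i y) + 1 = d x) ∧
  -- (3) at most one increasing neighbour per coordinate at positive values
  (∀ (x : ∀ i, V i) (i : Fin n), 0 < d x →
    ∀ y z : V i, (G i).Adj (x i) y → (G i).Adj (x i) z →
      d (Function.update x i y) = d x + 1 → d (Function.update x i z) = d x + 1 → y = z) ∧
  -- (4) two increasing neighbours in distinct coordinates combine to +2
  (∀ (x : ∀ i, V i) (i j : Fin n), i ≠ j →
    ∀ (yi : V i) (yj : V j), (G i).Adj (x i) yi → (G j).Adj (x j) yj →
      d (Function.update x i yi) = d x + 1 → d (Function.update x j yj) = d x + 1 →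
      d (Function.update (Function.update x i yi) j yj) = d x + 2)

/-- `ȳ` is geodesic with `x̄`: `d(ȳ) = d(x̄) − Σ_j dist(x_j, y_j)`. -/
def Geodesic {n : ℕ} {V : Fin n → Type} (G : ∀ i, SimpleGraph (V i))
    (d : (∀ i, V i) → ℕ) (x y : ∀ i, V i) : Prop :=
  d y + ∑ i, (G i).dist (x i) (y i) = d x

/-- `a` lies on the geodesic path from `u` to `w` in a tree. -/
def OnPath {V : Type} (G : SimpleGraph V) (u a w : V) : Prop :=
  G.dist u a + G.dist a w = G.dist u w

/-- Lemma (converse): if both `A` and `A ∪ {y}` are in `K_n`, where `y` is a leaf attached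
to `x_k ∈ A_k`, then `A ∪ {y}` is an elementary good extension of `A` of type 1 or 2. -/
theorem stmt6 {n : ℕ} (V : Fin n → Type) (G : ∀ i, SimpleGraph (V i))
    (d : (∀ i, V i) → ℕ) (k : Fin n) (y xk : V k)
    (hleaf : ∀ z : V k, (G k).Adj y z ↔ z = xk)
    (P : ∀ i, Set (V i))
    (hP1 : ∀ i, i ≠ k → P i = Set.univ) (hP2 : P k = {y}ᶜ)
    (hA : InK n (fun i => ↥(P i)) (fun i => (G i).induce (P i))
      (fun x => d (fun i => (x i : V i))))
    (hB : InK n V G d) :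
    -- type 1
    (∀ x : ∀ i, V i, (∀ j, x j ∈ P j) → x k = xk →
      (d (Function.update x k y) : ℤ) = |(d x : ℤ) - 1|) ∨
    -- type 2
    (∃ x : ∀ i, V i, (∀ j, x j ∈ P j) ∧ x k = xk ∧
      (∀ (i : Fin n) (z : V i), (G i).Adj (x i) z →
        (∀ j, Function.update x i z j ∈ P j) → d (Function.update x i z) ≤ d x) ∧
      (∀ z : ∀ i, V i, (∀ j, z j ∈ P j) → z k = xk →
        (Geodesic G d x z → d (Function.update z k y) = d z + 1) ∧
        (¬ Geodesic G d x z → (d (Function.update z k y) : ℤ) = |(d z : ℤ) - 1|))) := by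
  obtain ⟨hFin, hTree, -, ax2, ax3, ax4⟩ := hB
  haveI : ∀ i, Finite (V i) := hFin
  have hconn : ∀ i, (G i).Connected := fun i => (hTree i).isConnected
  have hyxk : (G k).Adj y xk := (hleaf xk).mpr rfl
  have hxky : (G k).Adj xk y := hyxk.symm
  by_cases hcase : ∀ z : ∀ i, V i, z k = xk → 0 < d z →
      d (Function.update z k y) + 1 = d z
  · -- type 1
    left
    intro x _ hxk
    rcases Nat.eq_zero_or_pos (d x) with h0 | hp
    · have h2 := ax2 x k y (hxk ▸ hxky)
      rw [h0] at h2
      have h1 : d (Function.update x k y) = 1 := by omega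
      rw [h1, h0]
      norm_num
    · have h := hcase x hxk hp
      rw [abs_of_nonneg (by omega : (0:ℤ) ≤ (d x : ℤ) - 1)]
      omega
  · -- type 2
    right
    push_neg at hcase
    obtain ⟨z₀, hz₀k, hz₀pos, hz₀ne⟩ := hcase
    have hz₀up : d (Function.update z₀ k y) = d z₀ + 1 := by
      rcases ax2 z₀ k y (hz₀k ▸ hxky) with h | h
      · exact h
      · exact absurd h hz₀ne
    -- Step A : e = d + 1 on the whole slice
    have stepA : ∀ s : ℕ, ∀ z : ∀ i, V i, z k = xk →
        (∑ j, (G j).dist (z₀ j) (z j)) = s → d (Function.update z k y) = d z + 1 := by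
      intro s
      induction s using Nat.strong_induction_on with
      | _ s IH =>
        intro z hzk hs
        rcases Nat.eq_zero_or_pos s with h0 | hspos
        · subst h0
          have hz : z = z₀ := by
            funext j
            exact ((hconn j).dist_eq_zero_iff.mp
              ((Finset.sum_eq_zero_iff.mp hs) j (Finset.mem_univ j))).symm
          rw [hz]; exact hz₀up
        · obtain ⟨i, -, hi⟩ := Finset.exists_ne_zero_of_sum_ne_zero (by omega :
            (∑ j, (G j).dist (z₀ j) (z j)) ≠ 0)
          have hik : i ≠ k := by
            intro h; subst h
            rw [hz₀k, hzk] at hi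
            simp [SimpleGraph.dist_self] at hi
          have hki : k ≠ i := hik.symm
          obtain ⟨w, hadj, hw⟩ := stmt6_toward (hconn i) (Nat.pos_of_ne_zero hi)
          have hsumeq := stmt6_sum G z₀ z i w
          have hz'k : Function.update z i w k = xk := by
            rw [Function.update_of_ne hki]; exact hzk
          have he' := IH (∑ j, (G j).dist (z₀ j) (Function.update z i w j))
            (by omega) (Function.update z i w) hz'k rfl
          have hadj2 : (G i).Adj (Function.update z i w i) (z i) := by
            rw [Function.update_self]; exact hadj.symm
          have h2 := ax2 (Function.update z i w) i (z i) hadj2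
          rw [Function.update_idem, Function.update_eq_self] at h2
          rcases h2 with hup | hdown
          · -- increasing: use axiom 4 with coordinates k and i
            have hres := ax4 (Function.update z i w) k i hki y (z i)
              (by rw [hz'k]; exact hxky) hadj2 he'
              (by rw [Function.update_idem, Function.update_eq_self]; exact hup)
            rw [Function.update_comm hki, Function.update_idem,
              Function.update_eq_self] at hres
            omega
          · -- decreasing: pure arithmetic with axiom 2 twice
            have hadj3 : (G i).Adj (Function.update (Function.update z i w) k y i) (z i) := by
              rw [Function.update_of_ne hik, Function.update_self]; exact hadj.symm
            have h3 := ax2 (Function.update (Function.update z i w) k y) i (z i) hadj3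
            rw [Function.update_comm hki, Function.update_idem,
              Function.update_eq_self] at h3
            have hez := ax2 z k y (hzk ▸ hxky)
            omega
    have eA : ∀ z : ∀ i, V i, z k = xk → d (Function.update z k y) = d z + 1 :=
      fun z hz => stepA _ z hz rfl
    -- choose a maximizer of d on the slice
    haveI : Nonempty {z : ∀ i, V i // z k = xk} := ⟨⟨z₀, hz₀k⟩⟩
    obtain ⟨⟨xb, hxbk⟩, hxbmax⟩ :=
      Finite.exists_max (fun z : {z : ∀ i, V i // z k = xk} => d z.1)
      (α := {z : ∀ i, V i // z k = xk})
    have hmaxd : ∀ z : ∀ i, V i, z k = xk → d z ≤ d xb := fun z hz => hxbmax ⟨z, hz⟩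
    have hxbpos : 0 < d xb := lt_of_lt_of_le hz₀pos (hmaxd z₀ hz₀k)
    -- Step T : every slice tuple is geodesic with xb
    have geoT : ∀ s : ℕ, ∀ z : ∀ i, V i, z k = xk →
        (∑ j, (G j).dist (xb j) (z j)) = s → d z + s = d xb := by
      intro s
      induction s using Nat.strong_induction_on with
      | _ s IH =>
        intro z hzk hs
        rcases Nat.eq_zero_or_pos s with h0 | hspos
        · subst h0
          have hz : z = xb := by
            funext j
            exact ((hconn j).dist_eq_zero_iff.mp
              ((Finset.sum_eq_zero_iff.mp hs) j (Finset.mem_univ j))).symm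
          rw [hz]; omega
        · obtain ⟨i, -, hi⟩ := Finset.exists_ne_zero_of_sum_ne_zero (by omega :
            (∑ j, (G j).dist (xb j) (z j)) ≠ 0)
          have hik : i ≠ k := by
            intro h; subst h
            rw [hxbk, hzk] at hi
            simp [SimpleGraph.dist_self] at hi
          have hki : k ≠ i := hik.symm
          obtain ⟨w, hadj, hw⟩ := stmt6_toward (hconn i) (Nat.pos_of_ne_zero hi)
          have hsumeq := stmt6_sum G xb z i w
          have hz'k : Function.update z i w k = xk := by
            rw [Function.update_of_ne hki]; exact hzk
          have hT' := IH (∑ j, (G j).dist (xb j) (Function.update z i w j))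
            (by omega) (Function.update z i w) hz'k rfl
          have hadj2 : (G i).Adj (Function.update z i w i) (z i) := by
            rw [Function.update_self]; exact hadj.symm
          have h2 := ax2 (Function.update z i w) i (z i) hadj2
          rw [Function.update_idem, Function.update_eq_self] at h2
          rcases h2 with hup | hdown
          · -- d z = d z' + 1 : derive a contradiction
            exfalso
            have he' := eA (Function.update z i w) hz'k
            rcases Nat.eq_zero_or_pos ((G i).dist (xb i) w) with hw0 | hwpos
            · -- w sits at xb i
              by_cases hs2 : 2 ≤ s
              · -- find a second moving coordinate j
                have hSz' : (∑ j, (G j).dist (xb j) (Function.update z i w j)) ≠ 0 := by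
                  omega
                obtain ⟨j, -, hj⟩ := Finset.exists_ne_zero_of_sum_ne_zero hSz'
                have hji : j ≠ i := by
                  intro h; subst h
                  rw [Function.update_self] at hj
                  exact hj hw0
                have hjz : Function.update z i w j = z j := Function.update_of_ne hji w z
                rw [hjz] at hj
                have hjk : j ≠ k := by
                  intro h; subst h
                  rw [hxbk, hzk] at hj
                  simp [SimpleGraph.dist_self] at hj
                have hkj : k ≠ j := hjk.symm
                have hij : i ≠ j := hji.symm
                obtain ⟨w', hadjj, hwj⟩ := stmt6_toward (hconn j) (Nat.pos_of_ne_zero hj)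
                -- the tuple u = z[j := w']
                have hsumu := stmt6_sum G xb z j w'
                have huk : Function.update z j w' k = xk := by
                  rw [Function.update_of_ne hkj]; exact hzk
                have hTu := IH (∑ l, (G l).dist (xb l) (Function.update z j w' l))
                  (by omega) (Function.update z j w') huk rfl
                -- the tuple u' = z'[j := w']
                have hsumu' := stmt6_sum G xb (Function.update z i w) j w'
                rw [hjz] at hsumu'
                have hu'k : Function.update (Function.update z i w) j w' k = xk := by
                  rw [Function.update_of_ne hkj, Function.update_of_ne hki]; exact hzk
                have hTu' := IH
                  (∑ l, (G l).dist (xb l) (Function.update (Function.update z i w) j w' l))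
                  (by omega) (Function.update (Function.update z i w) j w') hu'k rfl
                -- axiom 4 at z'[k := y] with coordinates i and j
                have hres := ax4 (Function.update (Function.update z i w) k y) i j hij
                  (z i) w'
                  (by rw [Function.update_of_ne hik, Function.update_self]; exact hadj.symm)
                  (by rw [Function.update_of_ne hjk, Function.update_of_ne hji]; exact hadjj)
                  (by rw [Function.update_comm hki, Function.update_idem,
                        Function.update_eq_self, eA z hzk, he']; omega)
                  (by rw [Function.update_comm hkj,
                        eA (Function.update (Function.update z i w) j w') hu'k, he']; omega)
                rw [Function.update_comm hki, Function.update_idem,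
                  Function.update_eq_self, Function.update_comm hkj,
                  eA (Function.update z j w') huk, he'] at hres
                omega
              · -- s = 1 : z' = xb and d z = d xb + 1, contradicting maximality
                have hSz' : (∑ j, (G j).dist (xb j) (Function.update z i w j)) = 0 := by
                  omega
                have hz' : Function.update z i w = xb := by
                  funext j
                  exact ((hconn j).dist_eq_zero_iff.mp
                    ((Finset.sum_eq_zero_iff.mp hSz') j (Finset.mem_univ j))).symm
                rw [hz'] at hup
                have := hmaxd z hzk
                omega
            · -- dist (xb i) w > 0 : use axiom 3 at z'[k := y] in coordinate i
              obtain ⟨w'', hadj'', hw''⟩ := stmt6_toward (hconn i) hwpos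
              have hsumz'' := stmt6_sum G xb z i w''
              have hz''k : Function.update z i w'' k = xk := by
                rw [Function.update_of_ne hki]; exact hzk
              have hT'' := IH (∑ j, (G j).dist (xb j) (Function.update z i w'' j))
                (by omega) (Function.update z i w'') hz''k rfl
              have hzw : z i = w'' := by
                refine ax3 (Function.update (Function.update z i w) k y) i
                  (by rw [he']; omega) (z i) w''
                  (by rw [Function.update_of_ne hik, Function.update_self]; exact hadj.symm)
                  (by rw [Function.update_of_ne hik, Function.update_self]; exact hadj'')
                  (by rw [Function.update_comm hki, Function.update_idem,
                        Function.update_eq_self, eA z hzk, he']; omega)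
                  (by rw [Function.update_comm hki, Function.update_idem,
                        eA (Function.update z i w'') hz''k, he']; omega)
              rw [← hzw] at hw''
              omega
          · omega
    -- assemble type 2
    have hPmem : ∀ z : ∀ i, V i, z k = xk → ∀ j, z j ∈ P j := by
      intro z hz j
      by_cases hj : j = k
      · subst hj
        simp only [hP2, Set.mem_compl_iff, Set.mem_singleton_iff, hz]
        exact hyxk.ne'
      · rw [hP1 j hj]; trivial
    refine ⟨xb, hPmem xb hxbk, hxbk, ?_, ?_⟩
    · intro i z hadj hPz
      by_cases hik : i = k
      · subst hik
        have hzy : z ≠ y := by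
          have := hPz i
          rw [Function.update_self] at this
          simpa [hP2] using this
        rcases ax2 xb i z hadj with hup | hdn
        · exact absurd (ax3 xb i hxbpos z y hadj (hxbk ▸ hxky) hup (eA xb hxbk)) hzy
        · omega
      · exact hmaxd _ (by rw [Function.update_of_ne (Ne.symm hik)]; exact hxbk)
    · intro z _ hzk
      exact ⟨fun _ => eA z hzk, fun hng => absurd (geoT _ z hzk rfl) hng⟩
end

section
/- Suppose A ⊆ B are both in K_n with B finite. Then B arises from A by a finite sequence of elementary good extensions (each adding one new leaf vertex to one coordinate tree, with codistance values determined as in the type-1 or type-2 rules). -/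
open SimpleGraph

/-- `Q` arises from `P` by one elementary good extension inside the ambient structure
`(V, G, d)`: a single new leaf `y` is added to coordinate `k`, adjacent (within `Q`) only
to `xk ∈ P k`, with codistances given by the type-1 or type-2 rule. -/
def GoodStep {n : ℕ} {V : Fin n → Type} (G : ∀ i, SimpleGraph (V i))
    (d : (∀ i, V i) → ℕ) (P Q : ∀ i, Set (V i)) : Prop :=
  ∃ (k : Fin n) (y xk : V k), y ∉ P k ∧ xk ∈ P k ∧ (G k).Adj xk y ∧
    Q k = insert y (P k) ∧ (∀ i, i ≠ k → Q i = P i) ∧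
    (∀ z ∈ Q k, (G k).Adj y z → z = xk) ∧
    -- type 1
    ((∀ x : ∀ i, V i, (∀ j, x j ∈ P j) → x k = xk →
        (d (Function.update x k y) : ℤ) = |(d x : ℤ) - 1|) ∨
    -- type 2
     (∃ x : ∀ i, V i, (∀ j, x j ∈ P j) ∧ x k = xk ∧
        (∀ (i : Fin n) (z : V i), (G i).Adj (x i) z →
          (∀ j, Function.update x i z j ∈ P j) → d (Function.update x i z) ≤ d x) ∧
        (∀ z : ∀ i, V i, (∀ j, z j ∈ P j) → z k = xk →
          (Geodesic G d x z → d (Function.update z k y) = d z + 1) ∧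
          (¬ Geodesic G d x z → (d (Function.update z k y) : ℤ) = |(d z : ℤ) - 1|))))

variable {W : Type} {G : SimpleGraph W}

/-- First step toward a target decreases distance. -/
lemma exists_toward (hc : G.Connected) {a b : W} (h : a ≠ b) :
    ∃ w, G.Adj a w ∧ G.dist w b + 1 = G.dist a b := by
  obtain ⟨p, hp⟩ := hc.exists_walk_length_eq_dist a b
  have hd : G.dist a b ≠ 0 := fun h0 => h (hc.dist_eq_zero_iff.mp h0)
  cases p with
  | nil => exact absurd rfl h
  | cons hadj q =>
    rename_i w
    refine ⟨w, hadj, ?_⟩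
    have h1 : G.dist w b ≤ q.length := SimpleGraph.dist_le q
    have h2 : G.dist a b ≤ G.dist a w + G.dist w b := hc.dist_triangle
    have h3 : G.dist a w ≤ 1 := by
      have := SimpleGraph.dist_le hadj.toWalk
      simpa using this
    simp only [SimpleGraph.Walk.length_cons] at hp
    omega

/-- In a tree, the path inside a connected induced subgraph between two of its
vertices is the geodesic; in particular there is a geodesic path with support inside `S`. -/
lemma subtree_path (ht : G.IsTree) {S : Set W} (hS : (G.induce S).Connected)
    {a b : W} (ha : a ∈ S) (hb : b ∈ S) :
    ∃ p : G.Walk a b, p.IsPath ∧ p.length = G.dist a b ∧ ∀ v ∈ p.support, v ∈ S := by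
  classical
  obtain ⟨q0⟩ := hS ⟨a, ha⟩ ⟨b, hb⟩
  set q := q0.bypass with hq
  have hqp : q.IsPath := q0.bypass_isPath
  set f := (SimpleGraph.Embedding.induce S (G := G)).toHom with hf
  have hfi : Function.Injective f := Subtype.val_injective
  set p : G.Walk a b := q.map f with hp
  have hpp : p.IsPath := SimpleGraph.Walk.map_isPath_of_injective hfi hqp
  have hsup : ∀ v ∈ p.support, v ∈ S := by
    intro v hv
    have hv2 : v ∈ (q.map f).support := hv
    rw [SimpleGraph.Walk.support_map] at hv2
    obtain ⟨u, _, rfl⟩ := List.mem_map.mp hv2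
    exact u.2
  -- length equals dist, via uniqueness of paths in trees
  obtain ⟨r, hr⟩ := ht.isConnected.exists_walk_length_eq_dist a b
  have hrp : r.bypass.IsPath := r.bypass_isPath
  have hrl : r.bypass.length = G.dist a b := by
    have h1 := SimpleGraph.Walk.length_bypass_le r
    have h2 := SimpleGraph.dist_le r.bypass
    omega
  have := ht.IsAcyclic.path_unique ⟨p, hpp⟩ ⟨r.bypass, hrp⟩
  have hlen : p.length = G.dist a b := by
    have : p = r.bypass := congrArg Subtype.val this
    rw [this]; exact hrl
  exact ⟨p, hpp, hlen, hsup⟩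

/-- Inside a connected induced subgraph of a tree, from `a` there is a neighbour in `S`
one step closer to `b`. -/
lemma subtree_toward (ht : G.IsTree) {S : Set W} (hS : (G.induce S).Connected)
    {a b : W} (ha : a ∈ S) (hb : b ∈ S) (hab : b ≠ a) :
    ∃ w ∈ S, G.Adj a w ∧ G.dist b w + 1 = G.dist b a := by
  obtain ⟨p, hpp, hlen, hsup⟩ := subtree_path ht hS ha hb
  have hd : G.dist a b ≠ 0 := fun h0 => hab (ht.isConnected.dist_eq_zero_iff.mp h0).symm
  cases p with
  | nil => exact absurd rfl hab
  | cons hadj q =>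
    rename_i w
    refine ⟨w, hsup w (by simp), hadj, ?_⟩
    have h1 : G.dist w b ≤ q.length := SimpleGraph.dist_le q
    have h2 : G.dist a b ≤ G.dist a w + G.dist w b := ht.isConnected.dist_triangle
    have h3 : G.dist a w ≤ 1 := by
      have := SimpleGraph.dist_le hadj.toWalk
      simpa using this
    simp only [SimpleGraph.Walk.length_cons] at hlen
    have e1 : G.dist b w = G.dist w b := SimpleGraph.dist_comm ..
    have e2 : G.dist b a = G.dist a b := SimpleGraph.dist_comm ..
    omega

/-- A vertex outside a connected induced subgraph of a tree has at most one neighbour in it. -/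
lemma subtree_unique_nbr (ht : G.IsTree) {S : Set W} (hS : (G.induce S).Connected)
    {y a b : W} (hy : y ∉ S) (ha : a ∈ S) (hb : b ∈ S)
    (h1 : G.Adj y a) (h2 : G.Adj y b) : a = b := by
  obtain ⟨p, hpp, _, hsup⟩ := subtree_path ht hS ha hb
  have hyp : y ∉ p.support := fun h => hy (hsup y h)
  have hw1 : (SimpleGraph.Walk.cons h1 p).IsPath := hpp.cons hyp
  have hw2 : (h2.toWalk).IsPath := by
    simp only [SimpleGraph.Adj.toWalk]
    exact SimpleGraph.Walk.IsPath.nil.cons (by simpa using fun h : y = b => hy (h ▸ hb))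
  have := ht.IsAcyclic.path_unique ⟨SimpleGraph.Walk.cons h1 p, hw1⟩ ⟨h2.toWalk, hw2⟩
  have hL : (SimpleGraph.Walk.cons h1 p).length = (h2.toWalk).length := by
    have h' := congrArg (fun r : G.Path y b => (r : G.Walk y b).length) this
    simpa using h'
  have hL2 : (h2.toWalk).length = 1 := rfl
  simp only [SimpleGraph.Walk.length_cons, SimpleGraph.Walk.length_nil] at hL
  exact SimpleGraph.Walk.eq_of_length_eq_zero (p := p) (by omega)

/-- aux -/
lemma crossing_aux {S : Set W} :
    ∀ {u v : W}, G.Walk u v → u ∈ S → v ∉ S → ∃ a ∈ S, ∃ y, y ∉ S ∧ G.Adj a y := by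
  intro u v w
  induction w with
  | nil => intro h1 h2; exact absurd h1 h2
  | cons hadj q ih =>
    intro h1 h2
    rename_i u' x' v'
    by_cases hxS : x' ∈ S
    · exact ih hxS h2
    · exact ⟨u', h1, x', hxS, hadj⟩

/-- A connected graph with a nonempty proper vertex subset has a crossing edge. -/
lemma exists_crossing (hc : G.Connected) {S : Set W} (hne : S.Nonempty) (hpr : S ≠ Set.univ) :
    ∃ a ∈ S, ∃ y, y ∉ S ∧ G.Adj a y := by
  obtain ⟨p, hp⟩ := hne
  have hv : ∃ v, v ∉ S := by
    by_contra h
    push_neg at h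
    exact hpr (Set.eq_univ_of_forall h)
  obtain ⟨v, hv⟩ := hv
  obtain ⟨w⟩ := hc p v
  exact crossing_aux w hp hv

/-- Adding a pendant vertex preserves connectedness of the induced subgraph. -/
lemma induce_insert_connected {S : Set W} (hS : (G.induce S).Connected)
    {x y : W} (hx : x ∈ S) (hadj : G.Adj x y) :
    (G.induce (insert y S)).Connected := by
  have hxm : x ∈ insert y S := Set.mem_insert_of_mem _ hx
  have key : ∀ a : (insert y S : Set W), (G.induce (insert y S)).Reachable a ⟨x, hxm⟩ := by
    rintro ⟨a, ha⟩
    rcases ha with rfl | haS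
    · refine SimpleGraph.Adj.reachable ?_
      show G.Adj a x
      exact hadj.symm
    · have h0 : (G.induce S).Reachable ⟨a, haS⟩ ⟨x, hx⟩ := hS _ _
      have hmap := h0.map (SimpleGraph.induceHomOfLE G (Set.subset_insert y S)).toHom
      exact hmap
  haveI : Nonempty (insert y S : Set W) := ⟨⟨x, hxm⟩⟩
  exact ⟨fun a b => (key a).trans (key b).symm⟩


section Main
variable {n : ℕ} {V : Fin n → Type} {G : ∀ i, SimpleGraph (V i)} {d : (∀ i, V i) → ℕ}

lemma sum_update_dist (x z : ∀ i, V i) (j : Fin n) (w : V j) :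
    (∑ i, (G i).dist (x i) (Function.update z j w i)) + (G j).dist (x j) (z j)
      = (∑ i, (G i).dist (x i) (z i)) + (G j).dist (x j) w := by
  classical
  have h1 : (fun i => (G i).dist (x i) (Function.update z j w i))
      = Function.update (fun i => (G i).dist (x i) (z i)) j ((G j).dist (x j) w) := by
    funext i
    by_cases h : i = j
    · subst h; simp
    · simp [Function.update_of_ne h]
  calc (∑ i, (G i).dist (x i) (Function.update z j w i)) + (G j).dist (x j) (z j)
      = (∑ i, Function.update (fun i => (G i).dist (x i) (z i)) j ((G j).dist (x j) w) i)
          + (G j).dist (x j) (z j) := by rw [h1]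
    _ = ((G j).dist (x j) w + ∑ i ∈ Finset.univ \ {j}, (G i).dist (x i) (z i))
          + (G j).dist (x j) (z j) := by rw [Finset.sum_update_of_mem (Finset.mem_univ j)]
    _ = (∑ i, (G i).dist (x i) (z i)) + (G j).dist (x j) w := by
          rw [Finset.sum_eq_sum_sdiff_singleton_add (Finset.mem_univ j)
            (fun i => (G i).dist (x i) (z i))]
          ring

lemma lipschitz (hconn : ∀ i, (G i).Connected)
    (hpm : ∀ (x : ∀ i, V i) (i : Fin n) (y : V i), (G i).Adj (x i) y →
      d (Function.update x i y) = d x + 1 ∨ d (Function.update x i y) + 1 = d x) :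
    ∀ (m : ℕ) (z1 z2 : ∀ i, V i), (∑ i, (G i).dist (z1 i) (z2 i)) = m →
      d z1 ≤ d z2 + m := by
  intro m
  induction m using Nat.strong_induction_on with
  | _ m IH =>
  intro z1 z2 hsum
  rcases Nat.eq_zero_or_pos m with rfl | hm
  · have hz : z1 = z2 := by
      funext i
      have h0 : (G i).dist (z1 i) (z2 i) = 0 :=
        Finset.sum_eq_zero_iff.mp hsum i (Finset.mem_univ i)
      exact (hconn i).dist_eq_zero_iff.mp h0
    rw [hz]; omega
  · have hex : ∃ i, (G i).dist (z1 i) (z2 i) ≠ 0 := by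
      by_contra h
      push_neg at h
      rw [Finset.sum_eq_zero (fun i _ => h i)] at hsum
      omega
    obtain ⟨i, hi⟩ := hex
    have hne : z2 i ≠ z1 i := by
      intro h
      rw [h] at hi
      exact hi ((hconn i).dist_eq_zero_iff.mpr rfl)
    obtain ⟨w, hadj, hw⟩ := exists_toward (hconn i) hne
    have hcm : (G i).dist (z1 i) (z2 i) = (G i).dist (z2 i) (z1 i) := dist_comm ..
    have hcm2 : (G i).dist (z1 i) w = (G i).dist w (z1 i) := dist_comm ..
    have hsum2 := sum_update_dist (G := G) z1 z2 i w
    have hlt : (∑ j, (G j).dist (z1 j) (Function.update z2 i w j)) = m - 1 := by omega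
    have hIH := IH (m - 1) (by omega) z1 (Function.update z2 i w) hlt
    rcases hpm z2 i w hadj with h | h <;> omega

lemma update_update_cancel {α : Type} {β : α → Type} [DecidableEq α] (f : ∀ a, β a)
    {j k : α} (h : j ≠ k) (v : β k) (w : β j) :
    Function.update (Function.update (Function.update f j w) k v) j (f j)
      = Function.update f k v := by
  funext t
  rcases eq_or_ne t j with rfl | htj
  · rw [Function.update_self, Function.update_of_ne h]
  · rw [Function.update_of_ne htj]
    rcases eq_or_ne t k with rfl | htk
    · rw [Function.update_self, Function.update_self]
    · rw [Function.update_of_ne htk, Function.update_of_ne htj, Function.update_of_ne htk]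

lemma ext_lemma
    (hFin : ∀ i, Finite (V i))
    (hTree : ∀ i, (G i).IsTree)
    (hpm : ∀ (x : ∀ i, V i) (i : Fin n) (y : V i), (G i).Adj (x i) y →
      d (Function.update x i y) = d x + 1 ∨ d (Function.update x i y) + 1 = d x)
    (huniq : ∀ (x : ∀ i, V i) (i : Fin n), 0 < d x →
      ∀ y z : V i, (G i).Adj (x i) y → (G i).Adj (x i) z →
        d (Function.update x i y) = d x + 1 → d (Function.update x i z) = d x + 1 → y = z)
    (hcomb : ∀ (x : ∀ i, V i) (i j : Fin n), i ≠ j →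
      ∀ (yi : V i) (yj : V j), (G i).Adj (x i) yi → (G j).Adj (x j) yj →
        d (Function.update x i yi) = d x + 1 → d (Function.update x j yj) = d x + 1 →
        d (Function.update (Function.update x i yi) j yj) = d x + 2)
    (P : ∀ i, Set (V i)) (hPconn : ∀ i, ((G i).induce (P i)).Connected)
    (k : Fin n) (y xk : V k) (hy : y ∉ P k) (hxk : xk ∈ P k) (hadj : (G k).Adj xk y) :
    ((∀ x : ∀ i, V i, (∀ j, x j ∈ P j) → x k = xk →
        (d (Function.update x k y) : ℤ) = |(d x : ℤ) - 1|) ∨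
     (∃ x : ∀ i, V i, (∀ j, x j ∈ P j) ∧ x k = xk ∧
        (∀ (i : Fin n) (z : V i), (G i).Adj (x i) z →
          (∀ j, Function.update x i z j ∈ P j) → d (Function.update x i z) ≤ d x) ∧
        (∀ z : ∀ i, V i, (∀ j, z j ∈ P j) → z k = xk →
          (Geodesic G d x z → d (Function.update z k y) = d z + 1) ∧
          (¬ Geodesic G d x z → (d (Function.update z k y) : ℤ) = |(d z : ℤ) - 1|)))) := by
  classical
  haveI : ∀ i, Finite (V i) := hFin
  have hconn : ∀ i, (G i).Connected := fun i => (hTree i).isConnected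
  have habs : ∀ a b : ℕ, a + 1 = b → (a : ℤ) = |(b : ℤ) - 1| := by
    intro a b h
    rw [abs_of_nonneg (by push_cast; omega)]
    push_cast
    omega
  have habs0 : ((1 : ℕ) : ℤ) = |((0 : ℕ) : ℤ) - 1| := by norm_num
  have hyadj : ∀ z : ∀ i, V i, z k = xk → (G k).Adj (z k) y := by
    intro z h; rw [h]; exact hadj
  by_cases hS : ∃ z : ∀ i, V i, (∀ j, z j ∈ P j) ∧ z k = xk ∧ 0 < d z ∧
      d (Function.update z k y) = d z + 1
  case neg =>
    left
    intro x hxP hxkk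
    rcases hpm x k y (hyadj x hxkk) with h | h
    · rcases Nat.eq_zero_or_pos (d x) with h0 | h0
      · rw [h, h0]; exact habs0
      · exact absurd ⟨x, hxP, hxkk, h0, h⟩ hS
    · exact habs _ _ h
  case pos =>
    set S : Set (∀ i, V i) := {z | (∀ j, z j ∈ P j) ∧ z k = xk ∧ 0 < d z ∧
      d (Function.update z k y) = d z + 1} with hSdef
    obtain ⟨xb, hxbS, hxbmax'⟩ := Set.Finite.exists_maximalFor d S (Set.toFinite S) hS
    obtain ⟨hxbP, hxbk, hxbpos, hxbinc⟩ := hxbS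
    have hmax : ∀ z : ∀ i, V i, (∀ j, z j ∈ P j) → z k = xk → 0 < d z →
        d (Function.update z k y) = d z + 1 → d z ≤ d xb := by
      intro z h1 h2 h3 h4
      by_contra h
      push_neg at h
      have := hxbmax' (j := z) ⟨h1, h2, h3, h4⟩ (le_of_lt h)
      omega
    -- (M1) xb is locally maximal within P
    have hlocmax : ∀ (i : Fin n) (z : V i), (G i).Adj (xb i) z →
        (∀ j, Function.update xb i z j ∈ P j) → d (Function.update xb i z) ≤ d xb := by
      intro i z hzadj hzP
      by_contra hcon
      have hup : d (Function.update xb i z) = d xb + 1 := by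
        rcases hpm xb i z hzadj with h | h <;> omega
      by_cases hik : i = k
      · subst hik
        have hzy : z = y := huniq xb i hxbpos z y hzadj (hyadj xb hxbk) hup hxbinc
        rw [hzy] at hzP
        exact hy (by simpa using hzP i)
      · have h4 := hcomb xb i k hik z y hzadj (hyadj xb hxbk) hup hxbinc
        have hk2 : Function.update xb i z k = xk := by
          rw [Function.update_of_ne (Ne.symm hik)]; exact hxbk
        have := hmax (Function.update xb i z) hzP hk2 (by omega) (by omega)
        omega
    -- (M2) Lemma L: on geodesics with positive value, away-steps decrease
    have lemL : ∀ m : ℕ, ∀ z : ∀ i, V i, (∀ j, z j ∈ P j) → z k = xk →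
        (∑ i, (G i).dist (xb i) (z i)) = m → d z + m = d xb → 0 < d z →
        ∀ i : Fin n, i ≠ k → ∀ w : V i, w ∈ P i → (G i).Adj (z i) w →
          (G i).dist (xb i) w = (G i).dist (xb i) (z i) + 1 →
          d (Function.update z i w) + 1 = d z := by
      intro m
      induction m using Nat.strong_induction_on with
      | _ m IH =>
      intro z hzP hzk hsum hgeo hdz i hik w hwP hadjw hwdist
      by_contra hcon
      have hup : d (Function.update z i w) = d z + 1 := by
        rcases hpm z i w hadjw with h | h <;> omega
      rcases Nat.eq_zero_or_pos m with rfl | hm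
      · -- z = xb
        have hz : z = xb := by
          funext t
          have h0 : (G t).dist (xb t) (z t) = 0 :=
            Finset.sum_eq_zero_iff.mp hsum t (Finset.mem_univ t)
          exact ((hconn t).dist_eq_zero_iff.mp h0).symm
        subst hz
        have := hlocmax i w hadjw (by
          intro j
          by_cases hj : j = i
          · subst hj; rw [Function.update_self]; exact hwP
          · rw [Function.update_of_ne hj]; exact hzP j)
        omega
      · -- pick a coordinate toward xb
        have hex : ∃ j, (G j).dist (xb j) (z j) ≠ 0 := by
          by_contra h
          push_neg at h
          rw [Finset.sum_eq_zero (fun j _ => h j)] at hsum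
          omega
        obtain ⟨j, hj⟩ := hex
        have hjk : j ≠ k := by
          intro h
          subst h
          rw [hzk, ← hxbk] at hj
          exact hj ((hconn j).dist_eq_zero_iff.mpr rfl)
        have hnej : xb j ≠ z j := fun h => hj ((hconn j).dist_eq_zero_iff.mpr h)
        obtain ⟨w', hw'P, hadjw', hw'dist⟩ :=
          subtree_toward (hTree j) (hPconn j) (hzP j) (hxbP j) hnej
        set z2 := Function.update z j w' with hz2
        have hz2P : ∀ t, z2 t ∈ P t := by
          intro t
          by_cases ht : t = j
          · subst ht; rw [hz2, Function.update_self]; exact hw'P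
          · rw [hz2, Function.update_of_ne ht]; exact hzP t
        have hz2k : z2 k = xk := by rw [hz2, Function.update_of_ne (Ne.symm hjk)]; exact hzk
        have hsum2 := sum_update_dist (G := G) xb z j w'
        have hz2sum : (∑ t, (G t).dist (xb t) (z2 t)) = m - 1 := by
          rw [hz2]; omega
        have hlip := lipschitz hconn hpm (m-1) xb z2 hz2sum
        have hz2d : d z2 = d z + 1 := by
          have h := hpm z j w' hadjw'
          rw [← hz2] at h
          omega
        have hz2geo : d z2 + (m - 1) = d xb := by omega
        by_cases hji : j = i
        · subst hji
          -- two increasing neighbours in the same coordinate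
          have hww : w = w' := huniq z j hdz w w' hadjw hadjw' hup (by rw [← hz2]; omega)
          subst hww
          omega
        · have h4 := hcomb z i j (fun h => hji h.symm) w w' hadjw hadjw' hup
            (by rw [← hz2]; omega)
          have he : Function.update (Function.update z i w) j w'
              = Function.update z2 i w := by
            rw [hz2, Function.update_comm (fun h => hji h.symm)]
          rw [he] at h4
          have := IH (m-1) (by omega) z2 hz2P hz2k hz2sum hz2geo (by omega) i hik w hwP
            (by rw [hz2, Function.update_of_ne (Ne.symm hji)]; exact hadjw)
            (by rw [hz2, Function.update_of_ne (Ne.symm hji)]; exact hwdist)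
          omega
    -- (M3) geodesic tuples increase towards y
    have dir1 : ∀ m : ℕ, ∀ z : ∀ i, V i, (∀ j, z j ∈ P j) → z k = xk →
        (∑ i, (G i).dist (xb i) (z i)) = m → d z + m = d xb →
        d (Function.update z k y) = d z + 1 := by
      intro m
      induction m using Nat.strong_induction_on with
      | _ m IH =>
      intro z hzP hzk hsum hgeo
      rcases Nat.eq_zero_or_pos m with rfl | hm
      · have hz : z = xb := by
          funext t
          have h0 : (G t).dist (xb t) (z t) = 0 :=
            Finset.sum_eq_zero_iff.mp hsum t (Finset.mem_univ t)
          exact ((hconn t).dist_eq_zero_iff.mp h0).symm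
        subst hz
        exact hxbinc
      · have hex : ∃ j, (G j).dist (xb j) (z j) ≠ 0 := by
          by_contra h
          push_neg at h
          rw [Finset.sum_eq_zero (fun j _ => h j)] at hsum
          omega
        obtain ⟨j, hj⟩ := hex
        have hjk : j ≠ k := by
          intro h
          subst h
          rw [hzk, ← hxbk] at hj
          exact hj ((hconn j).dist_eq_zero_iff.mpr rfl)
        have hnej : xb j ≠ z j := fun h => hj ((hconn j).dist_eq_zero_iff.mpr h)
        obtain ⟨w', hw'P, hadjw', hw'dist⟩ :=
          subtree_toward (hTree j) (hPconn j) (hzP j) (hxbP j) hnej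
        set z2 := Function.update z j w' with hz2
        have hz2P : ∀ t, z2 t ∈ P t := by
          intro t
          by_cases ht : t = j
          · subst ht; rw [hz2, Function.update_self]; exact hw'P
          · rw [hz2, Function.update_of_ne ht]; exact hzP t
        have hz2k : z2 k = xk := by rw [hz2, Function.update_of_ne (Ne.symm hjk)]; exact hzk
        have hsum2 := sum_update_dist (G := G) xb z j w'
        have hz2sum : (∑ t, (G t).dist (xb t) (z2 t)) = m - 1 := by
          rw [hz2]; omega
        have hlip := lipschitz hconn hpm (m-1) xb z2 hz2sum
        have hz2d : d z2 = d z + 1 := by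
          have h := hpm z j w' hadjw'
          rw [← hz2] at h
          omega
        have hz2geo : d z2 + (m - 1) = d xb := by omega
        have hIH := IH (m-1) (by omega) z2 hz2P hz2k hz2sum hz2geo
        -- relate d (update z k y) with d (update z2 k y)
        have he : Function.update (Function.update z2 k y) j (z j)
            = Function.update z k y := by
          rw [hz2]; exact update_update_cancel z hjk y w'
        have hadj2 : (G j).Adj (Function.update z2 k y j) (z j) := by
          rw [Function.update_of_ne hjk, hz2, Function.update_self]
          exact hadjw'.symm
        have h2 := hpm (Function.update z2 k y) j (z j) hadj2
        rw [he] at h2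
        have h1 := hpm z k y (hyadj z hzk)
        omega
    -- (M4) increasing tuples with positive value are geodesic
    have dir2 : ∀ m : ℕ, ∀ z : ∀ i, V i, (∀ j, z j ∈ P j) → z k = xk →
        (∑ i, (G i).dist (xb i) (z i)) = m → 0 < d z →
        d (Function.update z k y) = d z + 1 → d z + m = d xb := by
      intro m
      induction m using Nat.strong_induction_on with
      | _ m IH =>
      intro z hzP hzk hsum hdz hinc
      rcases Nat.eq_zero_or_pos m with rfl | hm
      · have hz : z = xb := by
          funext t
          have h0 : (G t).dist (xb t) (z t) = 0 :=
            Finset.sum_eq_zero_iff.mp hsum t (Finset.mem_univ t)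
          exact ((hconn t).dist_eq_zero_iff.mp h0).symm
        subst hz
        omega
      · have hex : ∃ i, (G i).dist (xb i) (z i) ≠ 0 := by
          by_contra h
          push_neg at h
          rw [Finset.sum_eq_zero (fun i _ => h i)] at hsum
          omega
        obtain ⟨i, hi⟩ := hex
        have hik : i ≠ k := by
          intro h
          subst h
          rw [hzk, ← hxbk] at hi
          exact hi ((hconn i).dist_eq_zero_iff.mpr rfl)
        have hnei : xb i ≠ z i := fun h => hi ((hconn i).dist_eq_zero_iff.mpr h)
        obtain ⟨w, hwP, hadjw, hwdist⟩ :=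
          subtree_toward (hTree i) (hPconn i) (hzP i) (hxbP i) hnei
        set z1 := Function.update z i w with hz1
        have hz1P : ∀ t, z1 t ∈ P t := by
          intro t
          by_cases ht : t = i
          · subst ht; rw [hz1, Function.update_self]; exact hwP
          · rw [hz1, Function.update_of_ne ht]; exact hzP t
        have hz1k : z1 k = xk := by rw [hz1, Function.update_of_ne (Ne.symm hik)]; exact hzk
        have hsum1 := sum_update_dist (G := G) xb z i w
        have hz1sum : (∑ t, (G t).dist (xb t) (z1 t)) = m - 1 := by
          rw [hz1]; omega
        have hz1i : z1 i = w := by rw [hz1, Function.update_self]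
        have hzidist : (G i).dist (xb i) (z i) = (G i).dist (xb i) (z1 i) + 1 := by
          rw [hz1i]; omega
        have hpm1 := hpm z i w hadjw
        rw [← hz1] at hpm1
        rcases hpm1 with hA | hB
        · -- d z1 = d z + 1 : combine with y and use IH
          have h4 := hcomb z i k hik w y hadjw (hyadj z hzk) (by rw [← hz1]; exact hA) hinc
          rw [← hz1] at h4
          have hIH := IH (m-1) (by omega) z1 hz1P hz1k hz1sum (by omega) (by omega)
          omega
        · -- d z1 + 1 = d z
          have he : Function.update (Function.update z1 k y) i (z i)
              = Function.update z k y := by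
            rw [hz1]; exact update_update_cancel z hik y w
          have hadj2 : (G i).Adj (Function.update z1 k y i) (z i) := by
            rw [Function.update_of_ne hik, hz1i]
            exact hadjw.symm
          have h2 := hpm (Function.update z1 k y) i (z i) hadj2
          rw [he] at h2
          have h3 := hpm z1 k y (hyadj z1 hz1k)
          have hinc1 : d (Function.update z1 k y) = d z1 + 1 := by omega
          rcases Nat.eq_zero_or_pos (d z1) with h0 | h0
          · -- the delicate case : d z1 = 0, d z = 1
            exfalso
            have hdz1 : d z = 1 := by omega
            have hm1 : m - 1 ≠ 0 := by
              intro hm1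
              have hz1xb : z1 = xb := by
                funext t
                have h00 : (G t).dist (xb t) (z1 t) = 0 :=
                  Finset.sum_eq_zero_iff.mp
                    (by omega : (∑ t, (G t).dist (xb t) (z1 t)) = 0) t (Finset.mem_univ t)
                exact ((hconn t).dist_eq_zero_iff.mp h00).symm
              rw [hz1xb] at h0
              omega
            -- toward step from z1
            have hex2 : ∃ j, (G j).dist (xb j) (z1 j) ≠ 0 := by
              by_contra h
              push_neg at h
              rw [Finset.sum_eq_zero (fun j _ => h j)] at hz1sum
              omega
            obtain ⟨j, hj⟩ := hex2
            have hjk : j ≠ k := by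
              intro h
              subst h
              rw [hz1k, ← hxbk] at hj
              exact hj ((hconn j).dist_eq_zero_iff.mpr rfl)
            have hnej : xb j ≠ z1 j := fun h => hj ((hconn j).dist_eq_zero_iff.mpr h)
            obtain ⟨w', hw'P, hadjw', hw'dist⟩ :=
              subtree_toward (hTree j) (hPconn j) (hz1P j) (hxbP j) hnej
            set z2 := Function.update z1 j w' with hz2
            have hz2P : ∀ t, z2 t ∈ P t := by
              intro t
              by_cases ht : t = j
              · subst ht; rw [hz2, Function.update_self]; exact hw'P
              · rw [hz2, Function.update_of_ne ht]; exact hz1P t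
            have hz2k : z2 k = xk := by
              rw [hz2, Function.update_of_ne (Ne.symm hjk)]; exact hz1k
            have hsum2 := sum_update_dist (G := G) xb z1 j w'
            have hz2sum : (∑ t, (G t).dist (xb t) (z2 t)) = m - 2 := by
              rw [hz2]; omega
            have hz2d : d z2 = 1 := by
              have h := hpm z1 j w' hadjw'
              rw [← hz2] at h
              omega
            -- z2 increases towards y by axiom (4)
            have h4 := hcomb z1 j k hjk w' y hadjw' (hyadj z1 hz1k)
              (by rw [← hz2]; omega) hinc1
            rw [← hz2] at h4
            have hz2inc : d (Function.update z2 k y) = d z2 + 1 := by omega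
            have hIH := IH (m-2) (by omega) z2 hz2P hz2k hz2sum (by omega) hz2inc
            -- so z2 is geodesic with xb
            by_cases hji : j = i
            · -- same coordinate: two increasing neighbours of update z1 k y
              subst hji
              have hb1 : (G j).Adj (Function.update z1 k y j) (z j) := hadj2
              have hb2 : (G j).Adj (Function.update z1 k y j) w' := by
                rw [Function.update_of_ne hjk]; exact hadjw'
              have he2 : Function.update (Function.update z1 k y) j w'
                  = Function.update z2 k y := by
                rw [hz2]; exact (Function.update_comm hjk w' y z1).symm
              have huu := huniq (Function.update z1 k y) j (by omega) (z j) w' hb1 hb2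
                (by rw [he]; omega) (by rw [he2]; omega)
              -- z j = w' is impossible by distances
              rw [hz1i] at hw'dist
              rw [huu] at hwdist
              omega
            · -- different coordinates : axiom (4) at update z1 k y, then lemma L
              have hb1 : (G i).Adj (Function.update z1 k y i) (z i) := hadj2
              have hb2 : (G j).Adj (Function.update z1 k y j) w' := by
                rw [Function.update_of_ne hjk]; exact hadjw'
              have he2 : Function.update (Function.update z1 k y) j w'
                  = Function.update z2 k y := by
                rw [hz2]; exact (Function.update_comm hjk w' y z1).symm
              have h5 := hcomb (Function.update z1 k y) i j (fun h => hji h.symm) (z i) w'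
                hb1 hb2 (by rw [he]; omega) (by rw [he2]; omega)
              set u := Function.update z2 i (z i) with hu
              have huz : u = Function.update z j w' := by
                rw [hu, hz2, hz1, Function.update_comm hji, Function.update_idem,
                  Function.update_eq_self]
              have he3 : Function.update (Function.update (Function.update z1 k y) i (z i)) j w'
                  = Function.update u k y := by
                rw [he, huz]
                exact Function.update_comm (Ne.symm hjk) y w' z
              rw [he3] at h5
              -- by lemma L, d u = 0
              have hz2geo : d z2 + (m - 2) = d xb := by omega
              have hLL := lemL (m-2) z2 hz2P hz2k hz2sum hz2geo (by omega) i hik (z i) (hzP i)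
                (by rw [hz2, Function.update_of_ne (Ne.symm hji), hz1i]; exact hadjw.symm)
                (by rw [hz2, Function.update_of_ne (Ne.symm hji), hz1i]; omega)
              rw [← hu] at hLL
              -- but d (update u k y) = 3 forces d u ≥ 2
              have huk : u k = xk := by
                rw [hu, Function.update_of_ne (Ne.symm hik)]; exact hz2k
              have h6 := hpm u k y (hyadj u huk)
              omega
          · -- d z1 > 0 : z1 is geodesic, and lemma L gives a contradiction
            exfalso
            have hIH := IH (m-1) (by omega) z1 hz1P hz1k hz1sum h0 hinc1
            have hLL := lemL (m-1) z1 hz1P hz1k hz1sum hIH h0 i hik (z i) (hzP i)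
              (by rw [hz1i]; exact hadjw.symm)
              (by rw [hz1i]; omega)
            have he4 : Function.update z1 i (z i) = z := by
              rw [hz1, Function.update_idem]
              exact Function.update_eq_self i z
            rw [he4] at hLL
            omega
    -- conclude type 2
    right
    refine ⟨xb, hxbP, hxbk, hlocmax, ?_⟩
    intro z hzP hzk
    constructor
    · intro hgeo
      exact dir1 (∑ i, (G i).dist (xb i) (z i)) z hzP hzk rfl hgeo
    · intro hngeo
      rcases Nat.eq_zero_or_pos (d z) with h0 | h0
      · have h1 := hpm z k y (hyadj z hzk)
        have hone : d (Function.update z k y) = 1 := by omega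
        rw [hone, h0]
        exact habs0
      · rcases hpm z k y (hyadj z hzk) with h | h
        · exact absurd (dir2 (∑ i, (G i).dist (xb i) (z i)) z hzP hzk rfl h0 h) hngeo
        · exact habs _ _ h

end Main

/-- Corollary: if `A ⊆ B` are both in `K_n` (with `B` finite), then `B` arises from `A`
by a finite sequence of elementary good extensions. -/
theorem stmt10 {n : ℕ} (V : Fin n → Type) (G : ∀ i, SimpleGraph (V i))
    (d : (∀ i, V i) → ℕ) (P : ∀ i, Set (V i))
    (hA : InK n (fun i => ↥(P i)) (fun i => (G i).induce (P i))
      (fun x => d (fun i => (x i : V i))))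
    (hB : InK n V G d) :
    ∃ (m : ℕ) (Q : ℕ → ∀ i, Set (V i)), Q 0 = P ∧ (∀ i, Q m i = Set.univ) ∧
      ∀ t < m, GoodStep G d (Q t) (Q (t + 1)) := by
  classical
  obtain ⟨hFin, hTree, hzero, hpm, huniq, hcomb⟩ := hB
  haveI : ∀ i, Finite (V i) := hFin
  have main : ∀ (N : ℕ) (R : ∀ i, Set (V i)),
      (∀ i, ((G i).induce (R i)).Connected) →
      (∑ i, ((R i)ᶜ : Set (V i)).ncard) ≤ N →
      ∃ (m : ℕ) (Q : ℕ → ∀ i, Set (V i)), Q 0 = R ∧ (∀ i, Q m i = Set.univ) ∧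
        ∀ t < m, GoodStep G d (Q t) (Q (t + 1)) := by
    intro N
    induction N with
    | zero =>
      intro R hRconn hcard
      refine ⟨0, fun _ => R, rfl, ?_, by omega⟩
      intro i
      have h0 : ((R i)ᶜ : Set (V i)).ncard = 0 := by
        have := Finset.sum_eq_zero_iff.mp (Nat.le_zero.mp hcard) i (Finset.mem_univ i)
        exact this
      have : ((R i)ᶜ : Set (V i)) = ∅ :=
        (Set.ncard_eq_zero (Set.toFinite _)).mp h0
      rw [← Set.compl_empty_iff, this]
    | succ N IH =>
      intro R hRconn hcard
      by_cases hU : ∀ i, R i = Set.univ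
      · exact ⟨0, fun _ => R, rfl, hU, by omega⟩
      · push_neg at hU
        obtain ⟨k, hk⟩ := hU
        have hRne : (R k).Nonempty := by
          have h := (hRconn k).nonempty
          obtain ⟨⟨a, ha⟩⟩ := h
          exact ⟨a, ha⟩
        obtain ⟨xk, hxk, y, hy, hadj⟩ := exists_crossing (hTree k).isConnected hRne hk
        set R' := Function.update R k (insert y (R k)) with hR'
        have hR'k : R' k = insert y (R k) := by rw [hR', Function.update_self]
        have hR'i : ∀ i, i ≠ k → R' i = R i := by
          intro i hik
          rw [hR', Function.update_of_ne hik]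
        have hR'conn : ∀ i, ((G i).induce (R' i)).Connected := by
          intro i
          by_cases hik : i = k
          · subst hik
            rw [hR'k]
            exact induce_insert_connected (hRconn i) hxk hadj
          · rw [hR'i i hik]
            exact hRconn i
        have hgood : GoodStep G d R R' := by
          refine ⟨k, y, xk, hy, hxk, hadj, hR'k, hR'i, ?_, ?_⟩
          · intro z hz hadjz
            rw [hR'k] at hz
            rcases hz with rfl | hz
            · exact absurd hadjz (SimpleGraph.irrefl _)
            · exact (subtree_unique_nbr (hTree k) (hRconn k) hy hxk hz hadj.symm hadjz).symm
          · exact ext_lemma hFin hTree hpm huniq hcomb R hRconn k y xk hy hxk hadj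
        have hcard' : (∑ i, ((R' i)ᶜ : Set (V i)).ncard) ≤ N := by
          have hlt : (∑ i, ((R' i)ᶜ : Set (V i)).ncard)
              < (∑ i, ((R i)ᶜ : Set (V i)).ncard) := by
            apply Finset.sum_lt_sum
            · intro i _
              by_cases hik : i = k
              · subst hik
                rw [hR'k, show (insert y (R i))ᶜ = (R i)ᶜ \ {y} by ext a; simp [or_comm]; tauto]
                exact le_of_lt (Set.ncard_diff_singleton_lt_of_mem (by exact hy) (Set.toFinite _))
              · rw [hR'i i hik]
            · refine ⟨k, Finset.mem_univ k, ?_⟩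
              rw [hR'k, show (insert y (R k))ᶜ = (R k)ᶜ \ {y} by ext a; simp [or_comm]; tauto]
              exact Set.ncard_diff_singleton_lt_of_mem (by exact hy) (Set.toFinite _)
          omega
        obtain ⟨m, Q', hQ'0, hQ'univ, hQ'step⟩ := IH R' hR'conn hcard'
        refine ⟨m + 1, fun t => if t = 0 then R else Q' (t - 1), by simp, ?_, ?_⟩
        · intro i
          simp only [Nat.succ_ne_zero, if_false, Nat.add_sub_cancel]
          exact hQ'univ i
        · intro t ht
          rcases Nat.eq_zero_or_pos t with rfl | htpos
          · simp only [if_pos rfl, Nat.zero_add, Nat.one_ne_zero, if_false]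
            rw [show (1 : ℕ) - 1 = 0 from rfl, hQ'0]
            exact hgood
          · have h1 : t ≠ 0 := by omega
            have h2 : t + 1 ≠ 0 := by omega
            simp only [if_neg h1, if_neg h2]
            have h3 : t - 1 + 1 = t := by omega
            have h4 : t + 1 - 1 = t := by omega
            rw [h4, ← h3]
            exact hQ'step (t - 1) (by omega)
  have hPconn : ∀ i, ((G i).induce (P i)).Connected := fun i => (hA.2.1 i).isConnected
  exact main (∑ i, ((P i)ᶜ : Set (V i)).ncard) P hPconn le_rfl
end

section
/- Let (A, d*) ∈ K_n with d* locally maximal at (x_1,...,x_n), and perform the type-2 elementary good extension attaching y to x_k. Then for any tuple ā with a_k = y and any coordinate i ≠ k, if the codistance at ā (with y) exceeds the codistance at ā with x_k in place of y, then there is at most one neighbour b of a_i raising the codistance of ā, and it lies on the geodesic from a_i toward x_i. -/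
open SimpleGraph

section AuxTree
open SimpleGraph
variable {W : Type} {G : SimpleGraph W}

lemma pathLenDist (hT : G.IsTree) {u w : W} (p : G.Walk u w) (hp : p.IsPath) :
    p.length = G.dist u w := by
  obtain ⟨q, hq, hql⟩ := (hT.isConnected u w).exists_path_of_dist
  rw [(hT.existsUnique_path u w).unique hp hq, hql]

lemma gateExists (hc : G.Connected) {u w : W} (h : 0 < G.dist u w) :
    ∃ c, G.Adj u c ∧ G.dist c w + 1 = G.dist u w := by
  obtain ⟨p, hp⟩ := (hc u w).exists_walk_length_eq_dist
  cases p with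
  | nil => exact absurd h (by simp)
  | @cons _ v' _ h' q =>
    refine ⟨v', h', ?_⟩
    have h1 : G.dist v' w ≤ q.length := dist_le q
    have h2 : G.dist u w ≤ 1 + G.dist v' w := by
      calc G.dist u w ≤ G.dist u v' + G.dist v' w := hc.dist_triangle
        _ ≤ 1 + G.dist v' w := by
            have : G.dist u v' ≤ 1 := by simpa using dist_le (Walk.cons h' Walk.nil)
            omega
    simp only [Walk.length_cons] at hp
    omega

lemma gateUnique (hT : G.IsTree) {u w b c : W} (hb : G.Adj u b) (hc : G.Adj u c)
    (h1 : G.dist b w + 1 = G.dist u w) (h2 : G.dist c w + 1 = G.dist u w) : b = c := by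
  obtain ⟨pb, hpb, hpbl⟩ := (hT.isConnected b w).exists_path_of_dist
  obtain ⟨pc, hpc, hpcl⟩ := (hT.isConnected c w).exists_path_of_dist
  have hb' : (Walk.cons hb pb).IsPath := by
    apply Walk.isPath_of_length_eq_dist
    simp [hpbl, ← h1]
  have hc' : (Walk.cons hc pc).IsPath := by
    apply Walk.isPath_of_length_eq_dist
    simp [hpcl, ← h2]
  have := (hT.existsUnique_path u w).unique hb' hc'
  have := congrArg (fun p => p.getVert 1) this
  simpa using this

lemma adjDistPM [DecidableEq W] (hT : G.IsTree) {u v : W} (h : G.Adj u v) (w : W) :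
    G.dist v w + 1 = G.dist u w ∨ G.dist u w + 1 = G.dist v w := by
  obtain ⟨q, hq, hql⟩ := (hT.isConnected v w).exists_path_of_dist
  by_cases hu : u ∈ q.support
  · right
    have ht := hq.takeUntil hu
    have hd := hq.dropUntil hu
    have hlen : (q.takeUntil u hu).length + (q.dropUntil u hu).length = q.length := by
      rw [← Walk.length_append, Walk.take_spec]
    have e1 : (q.takeUntil u hu).length = 1 := by
      rw [pathLenDist hT _ ht]
      exact dist_eq_one_iff_adj.2 h.symm
    have e2 : (q.dropUntil u hu).length = G.dist u w := pathLenDist hT _ hd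
    omega
  · left
    have : (Walk.cons h q).IsPath := hq.cons hu
    have := pathLenDist hT _ this
    simp only [Walk.length_cons, hql] at this
    omega

lemma treeOfInduceUniv (h : (G.induce Set.univ).IsTree) : G.IsTree := by
  rw [isTree_iff_existsUnique_path] at h ⊢
  obtain ⟨⟨v0⟩, hup⟩ := h
  refine ⟨⟨v0.1⟩, fun v w => ?_⟩
  have inj : Function.Injective (G.induceUnivIso.symm.toHom : W → ↥(Set.univ : Set W)) :=
    G.induceUnivIso.symm.toEquiv.injective
  have injf : Function.Injective (G.induceUnivIso.toHom : ↥(Set.univ : Set W) → W) :=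
    G.induceUnivIso.toEquiv.injective
  obtain ⟨p0, hp0, _⟩ := hup (G.induceUnivIso.symm v) (G.induceUnivIso.symm w)
  set cand : G.Walk v w := (p0.map G.induceUnivIso.toHom).copy (by simp) (by simp) with hcand
  have hcp : cand.IsPath := by
    rw [hcand, Walk.isPath_copy]
    exact Walk.map_isPath_of_injective injf hp0
  refine ⟨cand, hcp, fun q hq => ?_⟩
  apply SimpleGraph.Walk.map_injective_of_injective inj
  exact (hup _ _).unique (Walk.map_isPath_of_injective inj hq)
    (Walk.map_isPath_of_injective inj hcp)

end AuxTree

/-- In the type-2 good extension attaching `y` to `x_k` at a locally maximal tuple `x̄`: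
for a tuple `ā` with `a_k = y` whose codistance exceeds that of the tuple with `x_k`,
in each coordinate `i ≠ k` there is at most one neighbour `b` of `a_i` raising the
codistance, and any such `b` lies on the geodesic from `a_i` toward `x_i`. -/
theorem stmt16 {n : ℕ} (V : Fin n → Type) (G : ∀ i, SimpleGraph (V i))
    (d : (∀ i, V i) → ℕ) (k : Fin n) (y xk : V k)
    (hleaf : ∀ z : V k, (G k).Adj y z ↔ z = xk)
    (P : ∀ i, Set (V i))
    (hP1 : ∀ i, i ≠ k → P i = Set.univ) (hP2 : P k = {y}ᶜ)
    (hA : InK n (fun i => ↥(P i)) (fun i => (G i).induce (P i))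
      (fun x => d (fun i => (x i : V i))))
    (x : ∀ i, V i) (hx : ∀ i, x i ∈ P i) (hxk : x k = xk)
    (hmax : ∀ (i : Fin n) (z : V i), (G i).Adj (x i) z →
      (∀ j, Function.update x i z j ∈ P j) → d (Function.update x i z) ≤ d x)
    (hrule : ∀ z : ∀ i, V i, (∀ j, z j ∈ P j) → z k = xk →
      (Geodesic G d x z → d (Function.update z k y) = d z + 1) ∧
      (¬ Geodesic G d x z → (d (Function.update z k y) : ℤ) = |(d z : ℤ) - 1|)) :
    ∀ a : ∀ i, V i, (∀ j, a j ∈ P j) → a k = xk →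
      d a < d (Function.update a k y) →
      ∀ i : Fin n, i ≠ k →
        (∀ b c : V i, (G i).Adj (a i) b → (G i).Adj (a i) c →
          d (Function.update a k y) < d (Function.update (Function.update a k y) i b) →
          d (Function.update a k y) < d (Function.update (Function.update a k y) i c) →
          b = c) ∧
        (∀ b : V i, (G i).Adj (a i) b →
          d (Function.update a k y) < d (Function.update (Function.update a k y) i b) →
          (G i).dist b (x i) + 1 = (G i).dist (a i) (x i)) := by
  classical
  obtain ⟨hFin, hTrees, hzero, hax2, hax3, hax4⟩ := hA
  have treeI : ∀ i : Fin n, i ≠ k → (G i).IsTree := by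
    intro i hik
    have h : ((G i).induce (P i)).IsTree := hTrees i
    rw [hP1 i hik] at h
    exact treeOfInduceUniv h
  have connI : ∀ i : Fin n, i ≠ k → (G i).Connected := fun i hik => (treeI i hik).isConnected
  have ax2' : ∀ (z : ∀ j, V j) (hz : ∀ j, z j ∈ P j) (i : Fin n) (b : V i), b ∈ P i →
      (G i).Adj (z i) b →
      (d (Function.update z i b) = d z + 1 ∨ d (Function.update z i b) + 1 = d z) := by
    intro z hz i b hbP hadj
    have key : (fun j => ((Function.update (fun j => (⟨z j, hz j⟩ : ↥(P j))) i ⟨b, hbP⟩) j : V j))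
        = Function.update z i b := by
      funext j
      rcases eq_or_ne j i with rfl | hne
      · simp
      · simp [Function.update_of_ne hne]
    have h := hax2 (fun j => ⟨z j, hz j⟩) i ⟨b, hbP⟩ hadj
    simpa [key] using h
  have hsum : ∀ (z : ∀ j, V j) (i : Fin n) (c : V i),
      (∑ j, (G j).dist (x j) (Function.update z i c j)) + (G i).dist (x i) (z i)
      = (∑ j, (G j).dist (x j) (z j)) + (G i).dist (x i) c := by
    intro z i c
    have key : (fun j => (G j).dist (x j) (Function.update z i c j))
        = Function.update (fun j => (G j).dist (x j) (z j)) i ((G i).dist (x i) c) := by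
      funext j
      rcases eq_or_ne j i with rfl | hne
      · simp
      · simp [Function.update_of_ne hne]
    rw [key, Finset.sum_update_of_mem (Finset.mem_univ i),
      ← Finset.sum_erase_add Finset.univ _ (Finset.mem_univ i),
      Finset.sdiff_singleton_eq_erase]
    ring
  have hbound : ∀ (N : ℕ) (z : ∀ j, V j), (∀ j, z j ∈ P j) → z k = xk →
      (∑ j, (G j).dist (x j) (z j)) ≤ N → d x ≤ d z + N := by
    intro N
    induction N with
    | zero =>
      intro z hz hzk hs
      have hz0 : ∀ j, (G j).dist (x j) (z j) = 0 := by
        intro j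
        exact Finset.sum_eq_zero_iff.mp (Nat.le_zero.mp hs) j (Finset.mem_univ j)
      have : z = x := by
        funext j
        rcases eq_or_ne j k with rfl | hjk
        · rw [hzk, hxk]
        · exact ((connI j hjk).dist_eq_zero_iff.mp (hz0 j)).symm
      simp [this]
    | succ N ih =>
      intro z hz hzk hs
      by_cases hle : (∑ j, (G j).dist (x j) (z j)) ≤ N
      · have := ih z hz hzk hle
        linarith
      · have hpos : ∃ j, j ≠ k ∧ 0 < (G j).dist (x j) (z j) := by
          by_contra hcon
          push_neg at hcon
          have hz0 : ∀ j ∈ Finset.univ, (G j).dist (x j) (z j) = 0 := by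
            intro j _
            rcases eq_or_ne j k with rfl | hjk
            · simp [hzk, hxk]
            · exact Nat.le_zero.mp (hcon j hjk)
          exact hle (by rw [Finset.sum_eq_zero hz0]; exact Nat.zero_le N)
        obtain ⟨j, hjk, hdj⟩ := hpos
        obtain ⟨c, hcadj, hcd⟩ := gateExists (connI j hjk)
          (by rwa [SimpleGraph.dist_comm] at hdj)
        have hcP : c ∈ P j := by rw [hP1 j hjk]; trivial
        have hz'P : ∀ j', Function.update z j c j' ∈ P j' := by
          intro j'
          rcases eq_or_ne j' j with rfl | hne
          · simpa using hcP
          · simpa [Function.update_of_ne hne] using hz j'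
        have hz'k : Function.update z j c k = xk := by
          rw [Function.update_of_ne (Ne.symm hjk)]
          exact hzk
        have hsum' := hsum z j c
        have e1 : (G j).dist (x j) c + 1 = (G j).dist (x j) (z j) := by
          rw [SimpleGraph.dist_comm (u := x j) (v := c),
            SimpleGraph.dist_comm (u := x j) (v := z j)]
          exact hcd
        have hs' : (∑ j', (G j').dist (x j') (Function.update z j c j')) ≤ N := by
          linarith
        have hih := ih (Function.update z j c) hz'P hz'k hs'
        rcases ax2' z hz j c hcP hcadj with h | h <;> linarith
  have hstair : ∀ z : ∀ j, V j, (∀ j, z j ∈ P j) → z k = xk → Geodesic G d x z →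
      ∀ i : Fin n, i ≠ k → ∀ c : V i, (G i).Adj (z i) c →
      (G i).dist c (x i) + 1 = (G i).dist (z i) (x i) →
      d (Function.update z i c) = d z + 1 := by
    intro z hz hzk hgz i hik c hcadj htow
    have hcP : c ∈ P i := by rw [hP1 i hik]; trivial
    have hz'P : ∀ j', Function.update z i c j' ∈ P j' := by
      intro j'
      rcases eq_or_ne j' i with rfl | hne
      · simpa using hcP
      · simpa [Function.update_of_ne hne] using hz j'
    have hz'k : Function.update z i c k = xk := by
      rw [Function.update_of_ne (Ne.symm hik)]
      exact hzk
    have hge : d z + (∑ j, (G j).dist (x j) (z j)) = d x := hgz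
    have hsum' := hsum z i c
    have e1 : (G i).dist (x i) c + 1 = (G i).dist (x i) (z i) := by
      rw [SimpleGraph.dist_comm (u := x i) (v := c),
        SimpleGraph.dist_comm (u := x i) (v := z i)]
      exact htow
    have hb := hbound (∑ j, (G j).dist (x j) (Function.update z i c j))
      (Function.update z i c) hz'P hz'k le_rfl
    rcases ax2' z hz i c hcP hcadj with h | h
    · exact h
    · exfalso
      linarith
  intro a ha hak hlt i hik
  have hPa : ∀ b : V i, b ∈ P i := by
    intro b
    rw [hP1 i hik]
    trivial
  have hstep : d (Function.update a k y) = d a + 1 := by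
    by_cases hg : Geodesic G d x a
    · exact (hrule a ha hak).1 hg
    · have h2 := (hrule a ha hak).2 hg
      rcases abs_cases ((d a : ℤ) - 1) with ⟨he, h3⟩ | ⟨he, h3⟩ <;>
        · clear * - h2 he h3 hlt
          omega
  have hda0 : Geodesic G d x a ∨ d a = 0 := by
    by_cases hg : Geodesic G d x a
    · exact Or.inl hg
    · refine Or.inr ?_
      have h2 := (hrule a ha hak).2 hg
      rcases abs_cases ((d a : ℤ) - 1) with ⟨he, h3⟩ | ⟨he, h3⟩ <;>
        · clear * - h2 he h3 hlt
          omega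
  have keyfact : ∀ b : V i, (G i).Adj (a i) b →
      d (Function.update a k y) < d (Function.update (Function.update a k y) i b) →
      (G i).dist b (x i) + 1 = (G i).dist (a i) (x i) := by
    intro b hb hgt
    have hcomm : Function.update (Function.update a k y) i b
        = Function.update (Function.update a i b) k y :=
      Function.update_comm (Ne.symm hik) y b a
    set a' := Function.update a i b with ha'def
    have ha'P : ∀ j, a' j ∈ P j := by
      intro j
      rcases eq_or_ne j i with rfl | hne
      · rw [ha'def]
        simpa using hPa b
      · rw [ha'def]
        simpa [Function.update_of_ne hne] using ha j
    have ha'k : a' k = xk := by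
      rw [ha'def, Function.update_of_ne (Ne.symm hik)]
      exact hak
    rw [hcomm, hstep] at hgt
    have hax := ax2' a ha i b (hPa b) hb
    rw [← ha'def] at hax
    by_cases hg' : Geodesic G d x a'
    · have h1 : d (Function.update a' k y) = d a' + 1 := (hrule a' ha'P ha'k).1 hg'
      have hda' : d a' = d a + 1 := by
        rcases hax with h | h <;>
          · clear * - h h1 hgt
            omega
      have hsum' := hsum a i b
      have hg'e : d a' + (∑ j, (G j).dist (x j) (a' j)) = d x := hg'
      have c1 : (G i).dist (x i) b = (G i).dist b (x i) := SimpleGraph.dist_comm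
      have c2 : (G i).dist (x i) (a i) = (G i).dist (a i) (x i) := SimpleGraph.dist_comm
      rcases hda0 with hg | hda0
      · have hge : d a + (∑ j, (G j).dist (x j) (a j)) = d x := hg
        have hsum'' : (∑ j, (G j).dist (x j) (a' j)) + (G i).dist (x i) (a i)
            = (∑ j, (G j).dist (x j) (a j)) + (G i).dist (x i) b := by
          rw [ha'def]
          exact hsum'
        linarith
      · rcases adjDistPM (treeI i hik) hb (x i) with htow | haway
        · exact htow
        · exfalso
          have hadj2 : (G i).Adj (a' i) (a i) := by
            have hai : a' i = b := by
              rw [ha'def]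
              simp
            rw [hai]
            exact hb.symm
          have htow2 : (G i).dist (a i) (x i) + 1 = (G i).dist (a' i) (x i) := by
            have hai : a' i = b := by
              rw [ha'def]
              simp
            rw [hai]
            exact haway
          have hst := hstair a' ha'P ha'k hg' i hik (a i) hadj2 htow2
          have heq : Function.update a' i (a i) = a := by
            rw [ha'def, Function.update_idem]
            exact Function.update_eq_self i a
          rw [heq] at hst
          linarith
    · exfalso
      have h2 := (hrule a' ha'P ha'k).2 hg'
      rcases hax with h | h <;>
        rcases abs_cases ((d a' : ℤ) - 1) with ⟨he, h3⟩ | ⟨he, h3⟩ <;>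
        · clear * - h h2 he h3 hgt
          omega
  constructor
  · intro b c hb hc hgtb hgtc
    exact gateUnique (treeI i hik) hb hc (keyfact b hb hgtb) (keyfact c hc hgtc)
  · exact keyfact
end

section
/- Let (A, d*) ∈ K_n and let x̄, ȳ be geodesic tuples. Then for each coordinate j and each vertex a on the geodesic path in A_j from y_j to x_j, the tuple obtained from ȳ by replacing y_j with a is geodesic with x̄, and the tuple obtained from x̄ by replacing x_j with a is geodesic with ȳ. -/
open SimpleGraph

open SimpleGraph

lemma walk_step {n : ℕ} {V : Fin n → Type} {G : ∀ i, SimpleGraph (V i)}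
    {d : (∀ i, V i) → ℕ}
    (h2 : ∀ (x : ∀ i, V i) (i : Fin n) (y : V i), (G i).Adj (x i) y →
      d (Function.update x i y) = d x + 1 ∨ d (Function.update x i y) + 1 = d x)
    (u : ∀ i, V i) (i : Fin n) {c b : V i} (p : (G i).Walk c b) :
    d (Function.update u i b) ≤ d (Function.update u i c) + p.length := by
  induction p with
  | nil => simp
  | @cons c v b h p ih =>
    have hadj : (G i).Adj ((Function.update u i c) i) v := by
      simpa using h
    have := h2 (Function.update u i c) i v hadj
    rw [Function.update_idem] at this
    have : d (Function.update u i v) ≤ d (Function.update u i c) + 1 := by omega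
    calc d (Function.update u i b) ≤ d (Function.update u i v) + p.length := ih
    _ ≤ d (Function.update u i c) + (SimpleGraph.Walk.cons h p).length := by
        simp [SimpleGraph.Walk.length_cons]; omega

lemma upd_le {n : ℕ} {V : Fin n → Type} {G : ∀ i, SimpleGraph (V i)}
    {d : (∀ i, V i) → ℕ}
    (h2 : ∀ (x : ∀ i, V i) (i : Fin n) (y : V i), (G i).Adj (x i) y →
      d (Function.update x i y) = d x + 1 ∨ d (Function.update x i y) + 1 = d x)
    (hT : ∀ i, (G i).IsTree)
    (u : ∀ i, V i) (i : Fin n) (b : V i) :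
    d (Function.update u i b) ≤ d u + (G i).dist (u i) b := by
  obtain ⟨p, hp⟩ := ((hT i).isConnected (u i) b).exists_walk_length_eq_dist
  have := walk_step h2 u i p
  rwa [Function.update_eq_self, hp] at this

lemma lip {n : ℕ} {V : Fin n → Type} {G : ∀ i, SimpleGraph (V i)}
    {d : (∀ i, V i) → ℕ}
    (h2 : ∀ (x : ∀ i, V i) (i : Fin n) (y : V i), (G i).Adj (x i) y →
      d (Function.update x i y) = d x + 1 ∨ d (Function.update x i y) + 1 = d x)
    (hT : ∀ i, (G i).IsTree)
    (u v : ∀ i, V i) :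
    d v ≤ d u + ∑ i, (G i).dist (u i) (v i) := by
  classical
  have key : ∀ s : Finset (Fin n),
      d (fun k => if k ∈ s then v k else u k) ≤ d u + ∑ i ∈ s, (G i).dist (u i) (v i) := by
    intro s
    induction s using Finset.induction_on with
    | empty => simp
    | @insert i s hi ih =>
      have hfe : (fun k => if k ∈ insert i s then v k else u k)
          = Function.update (fun k => if k ∈ s then v k else u k) i (v i) := by
        funext k
        by_cases hk : k = i
        · subst hk; simp
        · simp [Function.update_of_ne hk, Finset.mem_insert, hk]
      rw [hfe]
      have h1 := upd_le h2 hT (fun k => if k ∈ s then v k else u k) i (v i)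
      simp only [hi, if_false] at h1
      rw [Finset.sum_insert hi]
      omega
  have := key Finset.univ
  simpa using this

/-- If `x̄, ȳ` are geodesic and `a` lies on the geodesic path from `y_j` to `x_j`, then
`ȳ` with `a` in place of `y_j` is geodesic with `x̄`, and `x̄` with `a` in place of `x_j`
is geodesic with `ȳ`. -/
theorem stmt17 {n : ℕ} (V : Fin n → Type) (G : ∀ i, SimpleGraph (V i))
    (d : (∀ i, V i) → ℕ) (hK : InK n V G d)
    (x y : ∀ i, V i) (hgeo : Geodesic G d x y)
    (j : Fin n) (a : V j) (ha : OnPath (G j) (y j) a (x j)) :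
    Geodesic G d x (Function.update y j a) ∧
    Geodesic G d (Function.update x j a) y := by
  classical
  obtain ⟨_, hT, _, h2, _, _⟩ := hK
  unfold Geodesic at hgeo ⊢
  unfold OnPath at ha
  have hs : ∀ u v : ∀ i, V i, ∑ i, (G i).dist (u i) (v i) = ∑ i, (G i).dist (v i) (u i) :=
    fun u v => Finset.sum_congr rfl fun i _ => SimpleGraph.dist_comm
  have hD : ∑ i, (G i).dist (x i) (y i)
      = (G j).dist (x j) (y j) + ∑ i ∈ ({j}ᶜ : Finset (Fin n)), (G i).dist (x i) (y i) :=
    Fintype.sum_eq_add_sum_compl j _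
  have hD1 : ∑ i, (G i).dist (x i) (Function.update y j a i)
      = (G j).dist (x j) a + ∑ i ∈ ({j}ᶜ : Finset (Fin n)), (G i).dist (x i) (y i) := by
    rw [Fintype.sum_eq_add_sum_compl j]
    simp only [Function.update_self]
    congr 1
    exact Finset.sum_congr rfl fun i hi => by
      rw [Function.update_of_ne (by simpa using hi)]
  have hD2 : ∑ i, (G i).dist (Function.update x j a i) (y i)
      = (G j).dist a (y j) + ∑ i ∈ ({j}ᶜ : Finset (Fin n)), (G i).dist (x i) (y i) := by
    rw [Fintype.sum_eq_add_sum_compl j]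
    simp only [Function.update_self]
    congr 1
    exact Finset.sum_congr rfl fun i hi => by
      rw [Function.update_of_ne (by simpa using hi)]
  have c1 : (G j).dist (x j) a = (G j).dist a (x j) := SimpleGraph.dist_comm
  have c2 : (G j).dist (x j) (y j) = (G j).dist (y j) (x j) := SimpleGraph.dist_comm
  have c3 : (G j).dist a (y j) = (G j).dist (y j) a := SimpleGraph.dist_comm
  have A : d (Function.update y j a) ≤ d y + (G j).dist (y j) a := upd_le h2 hT y j a
  have B : d x ≤ d (Function.update y j a) + ∑ i, (G i).dist (x i) (Function.update y j a i) := by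
    have := lip h2 hT (Function.update y j a) x
    rwa [hs] at this
  have C : d (Function.update x j a) ≤ d y + ∑ i, (G i).dist (Function.update x j a i) (y i) := by
    have := lip h2 hT y (Function.update x j a)
    rwa [hs] at this
  have E : d x ≤ d (Function.update x j a) + (G j).dist a (x j) := by
    have := upd_le h2 hT (Function.update x j a) j (x j)
    rw [Function.update_idem, Function.update_eq_self] at this
    simpa using this
  rw [hD1] at B ⊢
  rw [hD2] at C ⊢
  rw [hD] at hgeo
  omega
end
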